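/- Embedding a one-dimensional grid circuit into the butterfly architecture (Lemma 10 of the paper): let n ≥ 1 and M = 2^n. For each edge index i ∈ {0,…,2^n−2} (connecting modes i and i+1), let U_i be an arbitrary 2×2 unitary, and define the level ℓ(i) := ν₂(i+1) + 1 ∈ {1,…,n}, where ν₂ is the 2-adic valuation. For each L ∈ {1,…,n} let G_L be the M×M matrix that acts as U_i on the two modes {i, i+1} for every edge i with ℓ(i) = L (these edges are pairwise disjoint) and as the identity elsewhere, and set C := G_n·G_{n−1}⋯G_1. Then there exist a permutation σ of Fin(2^n) and unitary M×M matrices W_1, …, W_n, with W_L(x,y) = 0 whenever y ≠ x and y ≠ x XOR 2^{L−1}, such that C = P_σ · (W_n·W_{n−1}⋯W_1) · P_σᵀ, where P_σ is the permutation matrix of σ. -/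

import Mathlib

open Matrix

/-- The lower endpoint `i` of the grid edge `(i, i+1)`, viewed inside `Fin (2^n)`. -/
def edgeLo (n : ℕ) (i : Fin (2 ^ n - 1)) : Fin (2 ^ n) :=
  ⟨(i : ℕ), by have := i.isLt; omega⟩

/-- The upper endpoint `i+1` of the grid edge `(i, i+1)`, viewed inside `Fin (2^n)`. -/
def edgeHi (n : ℕ) (i : Fin (2 ^ n - 1)) : Fin (2 ^ n) :=
  ⟨(i : ℕ) + 1, by have := i.isLt; omega⟩


lemma xor_div_two (a b : ℕ) : (a ^^^ b) / 2 = a / 2 ^^^ b / 2 := by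
  apply Nat.eq_of_testBit_eq
  intro j
  simp [Nat.testBit_div_two, Nat.testBit_xor]

lemma xor_succ : ∀ k : ℕ, k ^^^ (k + 1) = 2 ^ (padicValNat 2 (k + 1) + 1) - 1 := by
  intro k
  induction k using Nat.strong_induction_on with
  | _ k IH =>
    haveI : Fact (Nat.Prime 2) := ⟨Nat.prime_two⟩
    rcases Nat.even_or_odd k with ⟨m, hm⟩ | ⟨m, hm⟩
    · have hv : padicValNat 2 (k + 1) = 0 := by
        rw [padicValNat.eq_zero_iff]
        right; right
        omega
      rw [hv]
      apply Nat.eq_of_testBit_eq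
      intro j
      cases j with
      | zero => simp [Nat.testBit_xor, Nat.testBit_zero]; omega
      | succ j =>
        have h1 : k / 2 = (k+1) / 2 := by omega
        simp [Nat.testBit_succ, xor_div_two, h1, Nat.testBit_two_pow_sub_one]
    · have hk1 : k + 1 = 2 * (m + 1) := by omega
      have hv : padicValNat 2 (k + 1) = padicValNat 2 (m + 1) + 1 := by
        rw [hk1, padicValNat.mul (by norm_num) (by omega), padicValNat.self (by norm_num)]
        omega
      have IHm := IH m (by omega)
      rw [hv]
      apply Nat.eq_of_testBit_eq
      intro j
      cases j with
      | zero =>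
        simp [Nat.testBit_xor, Nat.testBit_zero, Nat.testBit_two_pow_sub_one]
        omega
      | succ j =>
        have h1 : k / 2 = m := by omega
        have h2 : (k+1) / 2 = m + 1 := by omega
        have hd : (k ^^^ (k+1)) / 2 = m ^^^ (m+1) := by rw [xor_div_two, h1, h2]
        have hr : (2 ^ (padicValNat 2 (m+1) + 1 + 1) - 1) / 2
            = 2 ^ (padicValNat 2 (m+1) + 1) - 1 := by
          have he : (2:ℕ) ^ (padicValNat 2 (m+1) + 1 + 1) = 2 * 2 ^ (padicValNat 2 (m+1) + 1) := by
            ring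
          have hp : 0 < (2:ℕ) ^ (padicValNat 2 (m+1) + 1) := Nat.pow_pos (by norm_num)
          omega
        simp only [Nat.testBit_succ, hd, hr, IHm, Nat.testBit_two_pow_sub_one]

lemma gray_succ (k : ℕ) :
    (k + 1) ^^^ (k + 1) / 2 = (k ^^^ k / 2) ^^^ 2 ^ padicValNat 2 (k + 1) := by
  have h1 : (k ^^^ k / 2) ^^^ ((k+1) ^^^ (k+1)/2) = (k ^^^ (k+1)) ^^^ ((k ^^^ (k+1)) / 2) := by
    rw [xor_div_two]
    apply Nat.eq_of_testBit_eq
    intro j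
    simp [Nat.testBit_xor, Bool.xor_assoc, Bool.xor_comm, Bool.xor_left_comm]
  set v := padicValNat 2 (k+1) with hv
  have h2 : k ^^^ (k+1) = 2 ^ (v+1) - 1 := xor_succ k
  have h3 : (2 ^ (v+1) - 1) / 2 = 2 ^ v - 1 := by
    have : 2 ^ (v+1) = 2 * 2 ^ v := by ring
    have hp : 0 < 2 ^ v := Nat.pow_pos (by norm_num)
    omega
  have h4 : (2 ^ (v+1) - 1) ^^^ (2 ^ v - 1) = 2 ^ v := by
    apply Nat.eq_of_testBit_eq
    intro j
    simp only [Nat.testBit_xor, Nat.testBit_two_pow_sub_one, Nat.testBit_two_pow]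
    by_cases hj1 : j < v + 1 <;> by_cases hj2 : j < v <;> by_cases hj3 : v = j <;>
      simp [hj1, hj2, hj3] <;> omega
  have h5 : (k ^^^ k / 2) ^^^ ((k+1) ^^^ (k+1)/2) = 2 ^ v := by
    rw [h1, h2, h3, h4]
  calc (k + 1) ^^^ (k + 1) / 2 = (k ^^^ k/2) ^^^ ((k ^^^ k/2) ^^^ ((k+1) ^^^ (k+1)/2)) := by
        rw [← Nat.xor_assoc, Nat.xor_self, Nat.zero_xor]
    _ = (k ^^^ k / 2) ^^^ 2 ^ v := by rw [h5]

lemma gray_injective : Function.Injective (fun k : ℕ => k ^^^ k / 2) := by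
  intro a b h
  simp only at h
  set N := max a b + 1 with hN
  have ha : a < 2 ^ N := lt_of_le_of_lt (by omega) (Nat.lt_two_pow_self (n := N))
  have hb : b < 2 ^ N := lt_of_le_of_lt (by omega) (Nat.lt_two_pow_self (n := N))
  have key : ∀ t j, N ≤ j + t → a.testBit j = b.testBit j := by
    intro t
    induction t with
    | zero =>
      intro j hj
      rw [Nat.testBit_eq_false_of_lt (lt_of_lt_of_le ha (Nat.pow_le_pow_right (by norm_num) (by omega))),
          Nat.testBit_eq_false_of_lt (lt_of_lt_of_le hb (Nat.pow_le_pow_right (by norm_num) (by omega)))]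
    | succ t IHt =>
      intro j hj
      have hnext : a.testBit (j+1) = b.testBit (j+1) := IHt (j+1) (by omega)
      have h' := congrArg (fun x => x.testBit j) h
      simp only [Nat.testBit_xor, Nat.testBit_div_two] at h'
      rw [hnext] at h'
      simpa [Bool.xor_assoc] using congrArg (fun x => x ^^ b.testBit (j+1)) h'
  exact Nat.eq_of_testBit_eq (fun j => key N j (by omega))


lemma perm_conj {ι : Type*} [Fintype ι] [DecidableEq ι] (σ : Equiv.Perm ι)
    (A : Matrix ι ι ℂ) :
    σ.permMatrix ℂ * A * (σ.permMatrix ℂ)ᵀ = A.submatrix σ σ := by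
  ext x y
  simp [Matrix.mul_apply, Equiv.Perm.permMatrix, PEquiv.toMatrix_apply,
    Equiv.toPEquiv_apply, Matrix.transpose_apply, ite_mul, mul_ite,
    Finset.sum_ite_eq, Finset.sum_ite_eq']
  simp [Equiv.symm_apply_eq]

lemma prod_submatrix {ι : Type*} [Fintype ι] [DecidableEq ι] (e : ι ≃ ι) :
    ∀ l : List (Matrix ι ι ℂ),
      (l.map (fun A => A.submatrix ⇑e ⇑e)).prod = l.prod.submatrix ⇑e ⇑e
  | [] => by simp
  | A :: l => by
    simp only [List.map_cons, List.prod_cons, prod_submatrix e l]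
    rw [Matrix.submatrix_mul_equiv]

lemma sum_two_support {ι : Type*} [Fintype ι] [DecidableEq ι] (a b : ι) (hab : a ≠ b)
    (A B : ℂ) (c : ι → ℂ) :
    (∑ k, (if k = a then A else if k = b then B else 0) * c k) = A * c a + B * c b := by
  have key : ∀ k, (if k = a then A else if k = b then B else 0) * c k
      = (if k = a then A * c a else 0) + (if k = b then B * c b else 0) := by
    intro k
    by_cases h1 : k = a
    · subst h1; simp [hab]
    · by_cases h2 : k = b
      · subst h2; simp [h1]
      · simp [h1, h2]
  simp only [key, Finset.sum_add_distrib, Finset.sum_ite_eq', Finset.mem_univ, if_true]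

lemma padic_consec (a : ℕ) (ha : 0 < a) : padicValNat 2 a ≠ padicValNat 2 (a + 1) := by
  intro h
  rcases Nat.even_or_odd a with ⟨c, hc⟩ | ⟨c, hc⟩
  · have h1 : padicValNat 2 (a + 1) = 0 := by
      rw [padicValNat.eq_zero_iff]; right; right; omega
    rcases padicValNat.eq_zero_iff.mp (h.trans h1) with h2 | h2 | h2
    · norm_num at h2
    · omega
    · exact h2 ⟨c, by omega⟩
  · have h1 : padicValNat 2 a = 0 := by
      rw [padicValNat.eq_zero_iff]; right; right; omega
    have h2' : padicValNat 2 (a + 1) = 0 := h ▸ h1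
    rcases padicValNat.eq_zero_iff.mp h2' with h2 | h2 | h2
    · norm_num at h2
    · omega
    · exact h2 ⟨c + 1, by omega⟩

lemma G_unitary (n : ℕ)
    (U : Fin (2 ^ n - 1) → Matrix (Fin 2) (Fin 2) ℂ)
    (hU : ∀ i, U i ∈ Matrix.unitaryGroup (Fin 2) ℂ)
    (G : Fin n → Matrix (Fin (2 ^ n)) (Fin (2 ^ n)) ℂ)
    (hGgate : ∀ (L : Fin n) (i : Fin (2 ^ n - 1)),
      padicValNat 2 ((i : ℕ) + 1) + 1 = (L : ℕ) + 1 →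
      G L (edgeLo n i) (edgeLo n i) = U i 0 0 ∧
      G L (edgeLo n i) (edgeHi n i) = U i 0 1 ∧
      G L (edgeHi n i) (edgeLo n i) = U i 1 0 ∧
      G L (edgeHi n i) (edgeHi n i) = U i 1 1)
    (hGoff : ∀ (L : Fin n) (i : Fin (2 ^ n - 1)) (y : Fin (2 ^ n)),
      padicValNat 2 ((i : ℕ) + 1) + 1 = (L : ℕ) + 1 →
      y ≠ edgeLo n i → y ≠ edgeHi n i →
      G L (edgeLo n i) y = 0 ∧ G L (edgeHi n i) y = 0)
    (hGid : ∀ (L : Fin n) (x y : Fin (2 ^ n)),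
      (¬ ∃ i : Fin (2 ^ n - 1), padicValNat 2 ((i : ℕ) + 1) + 1 = (L : ℕ) + 1 ∧
        (x = edgeLo n i ∨ x = edgeHi n i)) →
      G L x y = if y = x then 1 else 0)
    (L : Fin n) : G L ∈ Matrix.unitaryGroup (Fin (2 ^ n)) ℂ := by
  classical
  rw [Matrix.mem_unitaryGroup_iff]
  ext x y
  rw [Matrix.mul_apply, Matrix.one_apply]
  simp only [Matrix.star_apply]
  have hfin2 : ∀ r : Fin 2, r = 0 ∨ r = 1 := by decide
  by_cases hx : ∃ i : Fin (2 ^ n - 1), padicValNat 2 ((i : ℕ) + 1) + 1 = (L : ℕ) + 1 ∧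
      (x = edgeLo n i ∨ x = edgeHi n i)
  · obtain ⟨i, hil, hpos⟩ := hx
    set ep : Fin 2 → Fin (2 ^ n) := fun p => if p = 0 then edgeLo n i else edgeHi n i with hep
    have hlohi : edgeLo n i ≠ edgeHi n i := fun h => by
      have := congrArg Fin.val h; simp [edgeLo, edgeHi] at this
    have hl : ep 0 = edgeLo n i := by simp [hep]
    have hh : ep 1 = edgeHi n i := by simp [hep]
    have hgate : ∀ p q : Fin 2, G L (ep p) (ep q) = U i p q := by
      obtain ⟨g00, g01, g10, g11⟩ := hGgate L i hil
      intro p q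
      rcases hfin2 p with hp | hp <;> rcases hfin2 q with hq | hq <;> subst hp <;> subst hq <;>
        simp only [hl, hh] <;> assumption
    have hep_inj : Function.Injective ep := by
      intro p q hpq
      rcases hfin2 p with hp | hp <;> subst hp <;> rcases hfin2 q with hq | hq <;> subst hq
      · rfl
      · rw [hl, hh] at hpq; exact absurd hpq hlohi
      · rw [hl, hh] at hpq; exact absurd hpq.symm hlohi
      · rfl
    have hoffe : ∀ (p : Fin 2) (z : Fin (2 ^ n)), z ≠ edgeLo n i → z ≠ edgeHi n i →
        G L (ep p) z = 0 := by
      intro p z h1 h2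
      have h := hGoff L i z hil h1 h2
      rcases hfin2 p with hp | hp <;> subst hp
      · rw [hl]; exact h.1
      · rw [hh]; exact h.2
    obtain ⟨p, hxp⟩ : ∃ p, x = ep p := by
      rcases hpos with h | h
      · exact ⟨0, by rw [h, hl]⟩
      · exact ⟨1, by rw [h, hh]⟩
    have hrow : ∀ k, G L x k = if k = edgeLo n i then U i p 0
        else if k = edgeHi n i then U i p 1 else 0 := by
      intro k
      by_cases h1 : k = edgeLo n i
      · rw [if_pos h1, hxp, h1, ← hl]
        exact hgate p 0
      · rw [if_neg h1]
        by_cases h2 : k = edgeHi n i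
        · rw [if_pos h2, hxp, h2, ← hh]
          exact hgate p 1
        · rw [if_neg h2, hxp]
          exact hoffe p k h1 h2
    have hsum : (∑ k, G L x k * star (G L y k))
        = U i p 0 * star (G L y (edgeLo n i)) + U i p 1 * star (G L y (edgeHi n i)) := by
      simp only [hrow]
      exact sum_two_support (edgeLo n i) (edgeHi n i) hlohi _ _ _
    rw [hsum]
    by_cases hy : ∃ i' : Fin (2 ^ n - 1), padicValNat 2 ((i' : ℕ) + 1) + 1 = (L : ℕ) + 1 ∧
        (y = edgeLo n i' ∨ y = edgeHi n i')
    · obtain ⟨i', hil', hpos'⟩ := hy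
      by_cases hii : i' = i
      · rw [hii] at hil' hpos'
        obtain ⟨q, hyq⟩ : ∃ q, y = ep q := by
          rcases hpos' with h | h
          · exact ⟨0, by rw [h, hl]⟩
          · exact ⟨1, by rw [h, hh]⟩
        rw [hyq, ← hl, ← hh, hgate q 0, hgate q 1]
        have huu : U i p 0 * star (U i q 0) + U i p 1 * star (U i q 1)
            = if p = q then 1 else 0 := by
          have h1 := Matrix.mem_unitaryGroup_iff.mp (hU i)
          have h2 : (U i * star (U i)) p q = (1 : Matrix (Fin 2) (Fin 2) ℂ) p q := by
            rw [h1]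
          rw [Matrix.mul_apply, Fin.sum_univ_two, Matrix.one_apply] at h2
          simpa [Matrix.star_apply] using h2
        rw [huu, hxp]
        by_cases hpq : p = q
        · rw [if_pos hpq, if_pos (by rw [hpq])]
        · rw [if_neg hpq, if_neg (fun h => hpq (hep_inj h))]
      · have hvne1 : (i : ℕ) ≠ (i' : ℕ) := fun h => hii (Fin.ext h.symm)
        have hvne2 : (i : ℕ) ≠ (i' : ℕ) + 1 := by
          intro h
          refine padic_consec ((i' : ℕ) + 1) (by omega) ?_
          have he : (i' : ℕ) + 1 + 1 = (i : ℕ) + 1 := by omega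
          rw [he]; omega
        have hvne3 : (i : ℕ) + 1 ≠ (i' : ℕ) := by
          intro h
          refine padic_consec ((i : ℕ) + 1) (by omega) ?_
          have he : (i : ℕ) + 1 + 1 = (i' : ℕ) + 1 := by omega
          rw [he]; omega
        have hvne4 : (i : ℕ) + 1 ≠ (i' : ℕ) + 1 := fun h => hvne1 (by omega)
        have hne_a : edgeLo n i ≠ edgeLo n i' := fun hc => hvne1 (show (edgeLo n i).val = (edgeLo n i').val from congrArg Fin.val hc)
        have hne_b : edgeLo n i ≠ edgeHi n i' := fun hc => hvne2 (show (edgeLo n i).val = (edgeHi n i').val from congrArg Fin.val hc)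
        have hne_c : edgeHi n i ≠ edgeLo n i' := fun hc => hvne3 (show (edgeHi n i).val = (edgeLo n i').val from congrArg Fin.val hc)
        have hne_d : edgeHi n i ≠ edgeHi n i' := fun hc => hvne4 (show (edgeHi n i).val = (edgeHi n i').val from congrArg Fin.val hc)
        have hoff1 := hGoff L i' (edgeLo n i) hil' hne_a hne_b
        have hoff2 := hGoff L i' (edgeHi n i) hil' hne_c hne_d
        have hy0 : G L y (edgeLo n i) = 0 := by
          rcases hpos' with h | h <;> rw [h]
          exacts [hoff1.1, hoff1.2]
        have hy1 : G L y (edgeHi n i) = 0 := by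
          rcases hpos' with h | h <;> rw [h]
          exacts [hoff2.1, hoff2.2]
        have hxy : x ≠ y := by
          intro hc
          rw [hxp] at hc
          rcases hfin2 p with hp | hp <;> subst hp
          · rw [hl] at hc
            rcases hpos' with h | h <;> rw [h] at hc
            exacts [hne_a hc, hne_b hc]
          · rw [hh] at hc
            rcases hpos' with h | h <;> rw [h] at hc
            exacts [hne_c hc, hne_d hc]
        rw [hy0, hy1, if_neg hxy]
        simp
    · have hy0 : G L y (edgeLo n i) = 0 := by
        rw [hGid L y (edgeLo n i) hy, if_neg]
        intro hc
        exact hy ⟨i, hil, Or.inl hc.symm⟩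
      have hy1 : G L y (edgeHi n i) = 0 := by
        rw [hGid L y (edgeHi n i) hy, if_neg]
        intro hc
        exact hy ⟨i, hil, Or.inr hc.symm⟩
      have hxy : x ≠ y := fun hc => hy ⟨i, hil, by rw [← hc]; exact hpos⟩
      rw [hy0, hy1, if_neg hxy]
      simp
  · have hsum : (∑ k, G L x k * star (G L y k)) = star (G L y x) := by
      rw [Finset.sum_eq_single_of_mem x (Finset.mem_univ x)
        (fun k _ hk => by rw [hGid L x k hx, if_neg hk, zero_mul]),
        hGid L x x hx, if_pos rfl, one_mul]
    rw [hsum]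
    by_cases hxy : x = y
    · subst hxy
      rw [hGid L x x hx]
      simp
    · have h0 : G L y x = 0 := by
        by_cases hy : ∃ i' : Fin (2 ^ n - 1), padicValNat 2 ((i' : ℕ) + 1) + 1 = (L : ℕ) + 1 ∧
            (y = edgeLo n i' ∨ y = edgeHi n i')
        · obtain ⟨i', hil', hpos'⟩ := hy
          have hxlo : x ≠ edgeLo n i' := fun hc => hx ⟨i', hil', Or.inl hc⟩
          have hxhi : x ≠ edgeHi n i' := fun hc => hx ⟨i', hil', Or.inr hc⟩
          have h := hGoff L i' x hil' hxlo hxhi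
          rcases hpos' with h' | h' <;> rw [h']
          exacts [h.1, h.2]
        · rw [hGid L y x hy, if_neg hxy]
      rw [h0, if_neg hxy]
      simp

noncomputable def grayPerm (n : ℕ) : Equiv.Perm (Fin (2 ^ n)) :=
  Equiv.ofBijective
    (fun k => ⟨(k : ℕ) ^^^ (k : ℕ) / 2,
      Nat.xor_lt_two_pow k.isLt (lt_of_le_of_lt (Nat.div_le_self _ _) k.isLt)⟩)
    (Finite.injective_iff_bijective.mp
      (fun a b hab => Fin.ext (gray_injective (congrArg Fin.val hab))))

lemma grayPerm_apply (n : ℕ) (x : Fin (2 ^ n)) :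
    ((grayPerm n) x : ℕ) = (x : ℕ) ^^^ (x : ℕ) / 2 := rfl


/-- **Embedding a one-dimensional grid circuit into the butterfly architecture**
(Lemma 10 of the paper).  Let `M = 2^n` and, for each edge `i` (connecting modes `i` and
`i+1`), let `U i` be a `2×2` unitary; the level of edge `i` is `ℓ(i) = ν₂(i+1) + 1`.
For each `L ∈ {1,…,n}` (here `L : Fin n` stands for level `L+1`), `G L` is the `M × M`
matrix acting as `U i` on the modes `{i, i+1}` of every edge `i` of level `L+1` and as
the identity elsewhere (the hypotheses `hGgate`, `hGoff`, `hGid` specify all its entries).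
Then the grid circuit `C = G_n ⋯ G_1` can be written as `P_σ · (W_n ⋯ W_1) · P_σᵀ` for
some permutation `σ` and unitary matrices `W_L` supported on the butterfly layer `L`,
i.e. `W L x y = 0` unless `y ∈ {x, x XOR 2^L}`. -/
theorem grid_embeds_in_butterfly (n : ℕ) (hn : 1 ≤ n)
    (U : Fin (2 ^ n - 1) → Matrix (Fin 2) (Fin 2) ℂ)
    (hU : ∀ i, U i ∈ Matrix.unitaryGroup (Fin 2) ℂ)
    (G : Fin n → Matrix (Fin (2 ^ n)) (Fin (2 ^ n)) ℂ)
    (hGgate : ∀ (L : Fin n) (i : Fin (2 ^ n - 1)),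
      padicValNat 2 ((i : ℕ) + 1) + 1 = (L : ℕ) + 1 →
      G L (edgeLo n i) (edgeLo n i) = U i 0 0 ∧
      G L (edgeLo n i) (edgeHi n i) = U i 0 1 ∧
      G L (edgeHi n i) (edgeLo n i) = U i 1 0 ∧
      G L (edgeHi n i) (edgeHi n i) = U i 1 1)
    (hGoff : ∀ (L : Fin n) (i : Fin (2 ^ n - 1)) (y : Fin (2 ^ n)),
      padicValNat 2 ((i : ℕ) + 1) + 1 = (L : ℕ) + 1 →
      y ≠ edgeLo n i → y ≠ edgeHi n i →
      G L (edgeLo n i) y = 0 ∧ G L (edgeHi n i) y = 0)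
    (hGid : ∀ (L : Fin n) (x y : Fin (2 ^ n)),
      (¬ ∃ i : Fin (2 ^ n - 1), padicValNat 2 ((i : ℕ) + 1) + 1 = (L : ℕ) + 1 ∧
        (x = edgeLo n i ∨ x = edgeHi n i)) →
      G L x y = if y = x then 1 else 0) :
    ∃ (σ : Equiv.Perm (Fin (2 ^ n))) (W : Fin n → Matrix (Fin (2 ^ n)) (Fin (2 ^ n)) ℂ),
      (∀ L, W L ∈ Matrix.unitaryGroup (Fin (2 ^ n)) ℂ) ∧
      (∀ (L : Fin n) (x y : Fin (2 ^ n)),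
        y ≠ x → (y : ℕ) ≠ (x : ℕ) ^^^ 2 ^ (L : ℕ) → W L x y = 0) ∧
      ((List.finRange n).reverse.map G).prod =
        σ.permMatrix ℂ * ((List.finRange n).reverse.map W).prod * (σ.permMatrix ℂ)ᵀ := by
  classical
  refine ⟨grayPerm n,
    fun L => (G L).submatrix ⇑(grayPerm n).symm ⇑(grayPerm n).symm, ?_, ?_, ?_⟩
  · intro L
    have h := Matrix.mem_unitaryGroup_iff.mp (G_unitary n U hU G hGgate hGoff hGid L)
    rw [Matrix.mem_unitaryGroup_iff]
    rw [Matrix.star_eq_conjTranspose, Matrix.conjTranspose_submatrix,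
      Matrix.submatrix_mul_equiv (G L) ((G L)ᴴ) _ ((grayPerm n).symm) _,
      ← Matrix.star_eq_conjTranspose, h, Matrix.submatrix_one_equiv]
  · intro L x y hyx hxor
    show (G L) ((grayPerm n).symm x) ((grayPerm n).symm y) = 0
    set a := (grayPerm n).symm x with hax
    set b := (grayPerm n).symm y with hby
    have hba : b ≠ a := by
      intro h
      apply hyx
      have := congrArg (grayPerm n) h
      rwa [Equiv.apply_symm_apply, Equiv.apply_symm_apply] at this
    by_cases ha : ∃ i : Fin (2 ^ n - 1), padicValNat 2 ((i : ℕ) + 1) + 1 = (L : ℕ) + 1 ∧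
        (a = edgeLo n i ∨ a = edgeHi n i)
    · obtain ⟨i, hil, hpos⟩ := ha
      have hv : padicValNat 2 ((i : ℕ) + 1) = (L : ℕ) := by omega
      have hkey : ((grayPerm n) (edgeHi n i) : ℕ)
          = ((grayPerm n) (edgeLo n i) : ℕ) ^^^ 2 ^ (L : ℕ) := by
        have hgs := gray_succ (i : ℕ)
        rw [hv] at hgs
        exact hgs
      have h1 : (grayPerm n) b = y := Equiv.apply_symm_apply _ y
      have h2 : (grayPerm n) a = x := Equiv.apply_symm_apply _ x
      rcases hpos with hal | hah
      · have hb1 : b ≠ edgeLo n i := by rw [← hal]; exact hba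
        have hb2 : b ≠ edgeHi n i := by
          intro hc
          apply hxor
          rw [hc] at h1
          rw [hal] at h2
          rw [← h1, ← h2]
          exact hkey
        rw [hal]
        exact (hGoff L i b hil hb1 hb2).1
      · have hb2 : b ≠ edgeHi n i := by rw [← hah]; exact hba
        have hb1 : b ≠ edgeLo n i := by
          intro hc
          apply hxor
          rw [hc] at h1
          rw [hah] at h2
          have hx2 : (x : ℕ) = (y : ℕ) ^^^ 2 ^ (L : ℕ) := by
            rw [← h1, ← h2]
            exact hkey
          rw [hx2, Nat.xor_assoc, Nat.xor_self, Nat.xor_zero]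
        rw [hah]
        exact (hGoff L i b hil hb1 hb2).2
    · rw [hGid L a b ha, if_neg hba]
  · rw [perm_conj]
    rw [show (List.finRange n).reverse.map
          (fun L => (G L).submatrix ⇑(grayPerm n).symm ⇑(grayPerm n).symm)
        = ((List.finRange n).reverse.map G).map
          (fun A => A.submatrix ⇑(grayPerm n).symm ⇑(grayPerm n).symm)
      from (List.map_map
        (g := fun A : Matrix (Fin (2 ^ n)) (Fin (2 ^ n)) ℂ =>
          A.submatrix ⇑(grayPerm n).symm ⇑(grayPerm n).symm)
        (f := G) (l := (List.finRange n).reverse)).symm]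
    rw [prod_submatrix, Matrix.submatrix_submatrix, Equiv.symm_comp_self,
      Matrix.submatrix_id_id]
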